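/- For each closed conditional expression t there exists a cr-basic form t' such that CP_cr proves t = t', where a cr-basic form is T, F, or t1 ◁ a ▷ t2 with t1, t2 cr-basic forms whose central condition (if present) differs from a. -/
import Mathlib


inductive CE (A : Type) : Type
  | tt : CE A
  | ff : CE A
  | atom : A → CE A
  | cond : CE A → CE A → CE A → CE A

inductive Deriv {A : Type} (Ax : CE A → CE A → Prop) : CE A → CE A → Prop
  | ax {t t'} : Ax t t' → Deriv Ax t t'
  | refl (t) : Deriv Ax t t
  | symm {t t'} : Deriv Ax t t' → Deriv Ax t' t
  | trans {t t' t''} : Deriv Ax t t' → Deriv Ax t' t'' → Deriv Ax t t''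
  | congr {x x' y y' z z'} : Deriv Ax x x' → Deriv Ax y y' → Deriv Ax z z' →
      Deriv Ax (.cond x y z) (.cond x' y' z')
  | cp1 (x y) : Deriv Ax (.cond x .tt y) x
  | cp2 (x y) : Deriv Ax (.cond x .ff y) y
  | cp3 (x) : Deriv Ax (.cond .tt x .ff) x
  | cp4 (x y z u v) : Deriv Ax (.cond x (.cond y z u) v) (.cond (.cond x y v) z (.cond x u v))

/-- Derivability from the CP axioms alone (no extra axioms). -/
def CP {A : Type} : CE A → CE A → Prop := Deriv (fun _ _ => False)

/-- The axiom schemes (CPcr1) and (CPcr2), for each atom a. -/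
def AxCr {A : Type} : CE A → CE A → Prop := fun s t =>
  (∃ (a : A) (x y z : CE A),
      s = .cond (.cond x (.atom a) y) (.atom a) z ∧ t = .cond x (.atom a) z) ∨
  (∃ (a : A) (x y z : CE A),
      s = .cond x (.atom a) (.cond y (.atom a) z) ∧ t = .cond x (.atom a) z)

/-- The side condition for cr-basic forms: the central condition (if present)
differs from a. -/
def crOK {A : Type} (a : A) : CE A → Prop
  | .cond _ (.atom b) _ => b ≠ a
  | _ => True

/-- cr-basic forms. -/
inductive CrBasic {A : Type} : CE A → Prop
  | tt : CrBasic .tt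
  | ff : CrBasic .ff
  | cond {t1 t2 : CE A} (a : A) : CrBasic t1 → CrBasic t2 → crOK a t1 → crOK a t2 →
      CrBasic (.cond t1 (.atom a) t2)

lemma absorbL {A : Type} (a : A) {t1 : CE A} (h : CrBasic t1) (t2 : CE A) :
    ∃ u : CE A, CrBasic u ∧ crOK a u ∧
      Deriv AxCr (.cond t1 (.atom a) t2) (.cond u (.atom a) t2) := by
  cases h with
  | tt => exact ⟨.tt, .tt, trivial, .refl _⟩
  | ff => exact ⟨.ff, .ff, trivial, .refl _⟩
  | @cond p q b hp hq okp okq =>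
    by_cases hb : b = a
    · subst hb
      exact ⟨p, hp, okp, .ax (Or.inl ⟨b, p, q, t2, rfl, rfl⟩)⟩
    · exact ⟨.cond p (.atom b) q, .cond b hp hq okp okq, hb, .refl _⟩

lemma absorbR {A : Type} (a : A) {t2 : CE A} (h : CrBasic t2) (t1 : CE A) :
    ∃ u : CE A, CrBasic u ∧ crOK a u ∧
      Deriv AxCr (.cond t1 (.atom a) t2) (.cond t1 (.atom a) u) := by
  cases h with
  | tt => exact ⟨.tt, .tt, trivial, .refl _⟩
  | ff => exact ⟨.ff, .ff, trivial, .refl _⟩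
  | @cond p q b hp hq okp okq =>
    by_cases hb : b = a
    · subst hb
      exact ⟨q, hq, okq, .ax (Or.inr ⟨b, t1, p, q, rfl, rfl⟩)⟩
    · exact ⟨.cond p (.atom b) q, .cond b hp hq okp okq, hb, .refl _⟩

lemma mkCond {A : Type} (a : A) {t1 t2 : CE A} (h1 : CrBasic t1) (h2 : CrBasic t2) :
    ∃ s : CE A, CrBasic s ∧ Deriv AxCr (.cond t1 (.atom a) t2) s := by
  obtain ⟨u, hu, oku, du⟩ := absorbL a h1 t2
  obtain ⟨v, hv, okv, dv⟩ := absorbR a h2 u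
  exact ⟨.cond u (.atom a) v, .cond a hu hv oku okv, du.trans dv⟩

lemma combine {A : Type} {y : CE A} (hy : CrBasic y) :
    ∀ {x z : CE A}, CrBasic x → CrBasic z →
      ∃ s : CE A, CrBasic s ∧ Deriv AxCr (.cond x y z) s := by
  induction hy with
  | tt => exact fun hx _ => ⟨_, hx, .cp1 _ _⟩
  | ff => exact fun _ hz => ⟨_, hz, .cp2 _ _⟩
  | @cond p q a hp hq okp okq ihp ihq =>
    intro x z hx hz
    obtain ⟨s1, hs1, d1⟩ := ihp hx hz
    obtain ⟨s2, hs2, d2⟩ := ihq hx hz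
    obtain ⟨s, hs, ds⟩ := mkCond a hs1 hs2
    exact ⟨s, hs, ((Deriv.cp4 x p (.atom a) q z).trans
      (Deriv.congr d1 (.refl _) d2)).trans ds⟩

theorem exists_cr_basic_form (A : Type) (t : CE A) :
    ∃ t' : CE A, CrBasic t' ∧ Deriv AxCr t t' := by
  induction t with
  | tt => exact ⟨.tt, .tt, .refl _⟩
  | ff => exact ⟨.ff, .ff, .refl _⟩
  | atom a =>
    exact ⟨.cond .tt (.atom a) .ff, .cond a .tt .ff trivial trivial,
      .symm (.cp3 _)⟩
  | cond x y z ihx ihy ihz =>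
    obtain ⟨x', hx, dx⟩ := ihx
    obtain ⟨y', hy, dy⟩ := ihy
    obtain ⟨z', hz, dz⟩ := ihz
    obtain ⟨s, hs, ds⟩ := combine hy hx hz
    exact ⟨s, hs, (Deriv.congr dx dy dz).trans ds⟩
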